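/- Every system S of equations in two complex variables x1, x2, where each equation has one of the forms x_i = 1, x_i + x_j = x_k, or x_i · x_j = x_k with i, j, k ∈ {1, 2}, that is consistent over C, has a solution (x̂1, x̂2) belonging to the finite set {(0,0), (0,1), (1,0), (1/2,1), (1,1/2), (1,1), (1,2), (2,1)}. In particular both coordinates of this solution have absolute value at most 2. -/

import Mathlib

inductive Eqn2 : Type
  | one : Fin 2 → Eqn2
  | add : Fin 2 → Fin 2 → Fin 2 → Eqn2
  | mul : Fin 2 → Fin 2 → Fin 2 → Eqn2

def Eqn2.sat (x : Fin 2 → ℂ) : Eqn2 → Prop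
  | Eqn2.one i => x i = 1
  | Eqn2.add i j k => x i + x j = x k
  | Eqn2.mul i j k => x i * x j = x k

lemma abs_half : ‖(1 / 2 : ℂ)‖ = 1 / 2 := by
  rw [norm_div, norm_one, Complex.norm_two]

lemma abs_le_two (x : Fin 2 → ℂ) (a b : ℂ) (h0 : x 0 = a) (h1 : x 1 = b)
    (hA : ‖a‖ ≤ 2) (hB : ‖b‖ ≤ 2) :
    ∀ i, ‖x i‖ ≤ 2 := by
  intro i
  fin_cases i
  · show ‖x 0‖ ≤ 2; rw [h0]; exact hA
  · show ‖x 1‖ ≤ 2; rw [h1]; exact hB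

/-- If `x 0 = 1` and `x 1` avoids all special values, `![1,2]` satisfies
every equation that `x` does. -/
lemma key_right (x : Fin 2 → ℂ) (ha : x 0 = 1) (hb : x 1 ≠ 1) (hb0 : x 1 ≠ 0)
    (hbh : x 1 ≠ 1/2) (hbm : x 1 ≠ -1) :
    ∀ e : Eqn2, e.sat x → e.sat ![1, 2] := by
  intro e he
  cases e with
  | one i => fin_cases i <;> simp only [Eqn2.sat] at he ⊢ <;> simp_all
  | add i j k =>
    fin_cases i <;> fin_cases j <;> fin_cases k <;>
      simp only [Eqn2.sat, Fin.mk_zero, Fin.mk_one, Matrix.cons_val_zero,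
        Matrix.cons_val_one, Matrix.head_cons] at he ⊢ <;>
      (try rw [ha] at he) <;>
      first
        | (norm_num; done)
        | (exfalso; norm_num at he; done)
        | (exfalso; apply hb0; linear_combination he)
        | (exfalso; apply hb0; linear_combination -he)
        | (exfalso; apply hbh; linear_combination he/2)
        | (exfalso; apply hb0; linear_combination he/2)
  | mul i j k =>
    fin_cases i <;> fin_cases j <;> fin_cases k <;>
      simp only [Eqn2.sat, Fin.mk_zero, Fin.mk_one, Matrix.cons_val_zero,
        Matrix.cons_val_one, Matrix.head_cons] at he ⊢ <;>
      (try rw [ha] at he) <;>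
      first
        | (norm_num; done)
        | (exfalso; apply hb; linear_combination he)
        | (exfalso; apply hb; linear_combination -he)
        | (exfalso
           have h3 : (x 1 - 1) * (x 1 + 1) = 0 := by linear_combination he
           rcases mul_eq_zero.mp h3 with h2 | h2
           exacts [hb (by linear_combination h2), hbm (by linear_combination h2)])
        | (exfalso
           have h3 : x 1 * (x 1 - 1) = 0 := by linear_combination he
           rcases mul_eq_zero.mp h3 with h2 | h2
           exacts [hb0 h2, hb (by linear_combination h2)])

/-- Symmetric version: `x 1 = 1` and `x 0` avoids special values. -/
lemma key_left (x : Fin 2 → ℂ) (hb : x 1 = 1) (ha : x 0 ≠ 1) (ha0 : x 0 ≠ 0)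
    (hah : x 0 ≠ 1/2) (ham : x 0 ≠ -1) :
    ∀ e : Eqn2, e.sat x → e.sat ![2, 1] := by
  intro e he
  cases e with
  | one i => fin_cases i <;> simp only [Eqn2.sat] at he ⊢ <;> simp_all
  | add i j k =>
    fin_cases i <;> fin_cases j <;> fin_cases k <;>
      simp only [Eqn2.sat, Fin.mk_zero, Fin.mk_one, Matrix.cons_val_zero,
        Matrix.cons_val_one, Matrix.head_cons] at he ⊢ <;>
      (try rw [hb] at he) <;>
      first
        | (norm_num; done)
        | (exfalso; norm_num at he; done)
        | (exfalso; apply ha0; linear_combination he)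
        | (exfalso; apply ha0; linear_combination -he)
        | (exfalso; apply hah; linear_combination he/2)
        | (exfalso; apply ha0; linear_combination he/2)
  | mul i j k =>
    fin_cases i <;> fin_cases j <;> fin_cases k <;>
      simp only [Eqn2.sat, Fin.mk_zero, Fin.mk_one, Matrix.cons_val_zero,
        Matrix.cons_val_one, Matrix.head_cons] at he ⊢ <;>
      (try rw [hb] at he) <;>
      first
        | (norm_num; done)
        | (exfalso; apply ha; linear_combination he)
        | (exfalso; apply ha; linear_combination -he)
        | (exfalso
           have h3 : (x 0 - 1) * (x 0 + 1) = 0 := by linear_combination he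
           rcases mul_eq_zero.mp h3 with h2 | h2
           exacts [ha (by linear_combination h2), ham (by linear_combination h2)])
        | (exfalso
           have h3 : x 0 * (x 0 - 1) = 0 := by linear_combination he
           rcases mul_eq_zero.mp h3 with h2 | h2
           exacts [ha0 h2, ha (by linear_combination h2)])

/-- If one coordinate is `1` and the other is `-1`, `![1,1]` works. -/
lemma key_ones (x : Fin 2 → ℂ) (u v : Fin 2 → ℂ) (h0 : u 0 = 1) (h1 : u 1 = 1)
    (hx0 : x 0 = v 0) (hx1 : x 1 = v 1)
    (hbad : ∀ i j k : Fin 2, v i + v j ≠ v k) (hone : ∀ i, v i = 1 → u i = 1) :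
    ∀ e : Eqn2, e.sat x → e.sat u := by
  intro e he
  cases e with
  | one i =>
    fin_cases i <;> simp only [Eqn2.sat] at he ⊢ <;>
      [exact hone 0 (hx0 ▸ he); exact hone 1 (hx1 ▸ he)]
  | add i j k =>
    exfalso
    simp only [Eqn2.sat] at he
    fin_cases i <;> fin_cases j <;> fin_cases k <;>
      simp only [Fin.mk_zero, Fin.mk_one, hx0, hx1] at he <;>
      first
        | exact hbad 0 0 0 he | exact hbad 0 0 1 he
        | exact hbad 0 1 0 he | exact hbad 0 1 1 he
        | exact hbad 1 0 0 he | exact hbad 1 0 1 he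
        | exact hbad 1 1 0 he | exact hbad 1 1 1 he
  | mul i j k =>
    fin_cases i <;> fin_cases j <;> fin_cases k <;>
      simp only [Eqn2.sat, Fin.mk_zero, Fin.mk_one, h0, h1] at he ⊢ <;> norm_num

theorem stmt_8 (S : Set Eqn2) (h : ∃ x : Fin 2 → ℂ, ∀ e ∈ S, e.sat x) :
    ∃ x : Fin 2 → ℂ, (∀ e ∈ S, e.sat x) ∧
      (x 0, x 1) ∈ ({(0, 0), (0, 1), (1, 0), (1 / 2, 1), (1, 1 / 2), (1, 1), (1, 2), (2, 1)} :
        Set (ℂ × ℂ)) ∧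
      (∀ i, ‖x i‖ ≤ 2) := by
  obtain ⟨x, hx⟩ := h
  suffices hs : ∃ y : Fin 2 → ℂ, (∀ e : Eqn2, e.sat x → e.sat y) ∧
      (y 0, y 1) ∈ ({(0, 0), (0, 1), (1, 0), (1 / 2, 1), (1, 1 / 2), (1, 1), (1, 2), (2, 1)} :
        Set (ℂ × ℂ)) ∧ (∀ i, ‖y i‖ ≤ 2) by
    obtain ⟨y, h1, h2, h3⟩ := hs
    exact ⟨y, fun e he => h1 e (hx e he), h2, h3⟩
  by_cases ha : x 0 = 1
  · by_cases hb : x 1 = 1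
    · refine ⟨x, fun e he => he, ?_, ?_⟩
      · rw [ha, hb]; simp
      · exact abs_le_two x 1 1 ha hb (by norm_num) (by norm_num)
    · by_cases hb0 : x 1 = 0
      · refine ⟨x, fun e he => he, ?_, ?_⟩
        · rw [ha, hb0]; simp
        · exact abs_le_two x 1 0 ha hb0 (by norm_num) (by norm_num)
      · by_cases hbh : x 1 = 1/2
        · refine ⟨x, fun e he => he, ?_, ?_⟩
          · rw [ha, hbh]; simp
          · exact abs_le_two x 1 (1/2) ha hbh (by norm_num) (by norm_num [abs_half])
        · by_cases hbm : x 1 = -1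
          · refine ⟨![1, 1], key_ones x ![1, 1] ![1, -1] (by norm_num) (by norm_num)
              (by rw [ha]; norm_num) (by rw [hbm]; norm_num) ?_ ?_, ?_, ?_⟩
            · intro i j k
              fin_cases i <;> fin_cases j <;> fin_cases k <;> norm_num
            · intro i
              fin_cases i <;> norm_num
            · simp
            · intro i; fin_cases i <;> norm_num
          · exact ⟨![1, 2], key_right x ha hb hb0 hbh hbm, by simp,
              by intro i; fin_cases i <;> norm_num [Complex.norm_two]⟩
  · by_cases hb : x 1 = 1
    · by_cases ha0 : x 0 = 0
      · refine ⟨x, fun e he => he, ?_, ?_⟩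
        · rw [ha0, hb]; simp
        · exact abs_le_two x 0 1 ha0 hb (by norm_num) (by norm_num)
      · by_cases hah : x 0 = 1/2
        · refine ⟨x, fun e he => he, ?_, ?_⟩
          · rw [hah, hb]; simp
          · exact abs_le_two x (1/2) 1 hah hb (by norm_num [abs_half]) (by norm_num)
        · by_cases ham : x 0 = -1
          · refine ⟨![1, 1], key_ones x ![1, 1] ![-1, 1] (by norm_num) (by norm_num)
              (by rw [ham]; norm_num) (by rw [hb]; norm_num) ?_ ?_, ?_, ?_⟩
            · intro i j k
              fin_cases i <;> fin_cases j <;> fin_cases k <;> norm_num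
            · intro i
              fin_cases i <;> norm_num
            · simp
            · intro i; fin_cases i <;> norm_num
          · exact ⟨![2, 1], key_left x hb ha ha0 hah ham, by simp,
              by intro i; fin_cases i <;> norm_num [Complex.norm_two]⟩
    · refine ⟨![0, 0], ?_, by simp, by intro i; fin_cases i <;> norm_num⟩
      intro e he
      cases e with
      | one i =>
        exfalso
        fin_cases i <;> simp only [Eqn2.sat, Fin.mk_zero, Fin.mk_one] at he <;>
          [exact ha he; exact hb he]
      | add i j k =>
        fin_cases i <;> fin_cases j <;> fin_cases k <;>
          simp only [Eqn2.sat, Matrix.cons_val_zero, Matrix.cons_val_one,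
            Matrix.head_cons] <;> norm_num
      | mul i j k =>
        fin_cases i <;> fin_cases j <;> fin_cases k <;>
          simp only [Eqn2.sat, Matrix.cons_val_zero, Matrix.cons_val_one,
            Matrix.head_cons] <;> norm_num
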